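/- arXiv:1211.5573 — 2 statements merged into one kernel-verified Lean document; each statement's English description precedes it below -/
import Mathlib

section
/- The 1-dimensional Hausdorff content σ of a line segment in ℂ equals half of its length, and σ is not increased under circular projection of a set onto a circle centered at a fixed point (equivalently, onto a ray): if A ⊂ ℂ and A* = {z₀ + |z − z₀| : z ∈ A} is the circular projection of A with center z₀ onto a ray, then σ(A*) ≤ σ(A). -/
open MeasureTheory Filter Metric Set Polynomial
open scoped ENNReal Topology

/-- The logarithmic potential `P(μ;z) = ∫ -log|z-ζ| dμ(ζ)`. -/
noncomputable def pot (μ : Measure ℂ) (z : ℂ) : ℝ := ∫ u, -Real.log (dist z u) ∂μ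

/-- The 1-dimensional Hausdorff content: infimum of sums of radii over countable
coverings by disks. -/
noncomputable def hc (A : Set ℂ) : ℝ≥0∞ :=
  ⨅ (c : ℕ → ℂ) (r : ℕ → ℝ) (_ : A ⊆ ⋃ i, Metric.ball (c i) (r i)),
    ∑' i, ENNReal.ofReal (r i)

/-- Convergence in σ-content to `φ` on compact subsets of `D`. -/
def SigmaConv (φn : ℕ → ℂ → ℂ) (φ : ℂ → ℂ) (D : Set ℂ) : Prop :=
  ∀ K : Set ℂ, K ⊆ D → IsCompact K → ∀ ε : ℝ, 0 < ε →
    Tendsto (fun n => hc {z ∈ K | ε < ‖φn n z - φ z‖}) atTop (𝓝 0)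

lemma hc_le_of_lipschitz (f : ℂ → ℂ) (hf : ∀ z w, dist (f z) (f w) ≤ dist z w)
    (A : Set ℂ) : hc (f '' A) ≤ hc A := by
  refine le_iInf fun c => le_iInf fun r => le_iInf fun hcov => ?_
  refine iInf_le_of_le (fun i => f (c i)) (iInf_le_of_le r (iInf_le_of_le ?_ le_rfl))
  rintro y ⟨z, hz, rfl⟩
  obtain ⟨i, hi⟩ := mem_iUnion.1 (hcov hz)
  exact mem_iUnion.2 ⟨i, mem_ball.2 (lt_of_le_of_lt (hf z (c i)) (mem_ball.1 hi))⟩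

/-- The 1-Hausdorff content of a line segment is half its length, and circular
projection `z ↦ z₀ + |z − z₀|` onto a ray does not increase the content. -/
theorem hc_segment_and_circular_projection :
    (∀ a b : ℂ, hc (segment ℝ a b) = ENNReal.ofReal (dist a b / 2)) ∧
    ∀ (z₀ : ℂ) (A : Set ℂ),
      hc ((fun z => z₀ + (dist z z₀ : ℂ)) '' A) ≤ hc A := by
  constructor
  · intro a b
    set d := dist a b with hd
    have hd0 : 0 ≤ d := dist_nonneg
    apply le_antisymm
    · -- upper bound
      refine ENNReal.le_of_forall_pos_le_add fun ε hε _ => ?_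
      have hcov : segment ℝ a b ⊆ ⋃ i : ℕ,
          Metric.ball ((fun _ => (a + b) / 2) i) ((fun i => if i = 0 then d / 2 + ε else 0) i) := by
        rintro z ⟨u, v, hu, hv, huv, rfl⟩
        refine mem_iUnion.2 ⟨0, mem_ball.2 ?_⟩
        show dist (u • a + v • b) ((a + b) / 2) < d / 2 + ε
        have hv' : v = 1 - u := by linarith
        have hz : u • a + v • b - (a + b) / 2 = ((u - 1/2 : ℝ) : ℂ) * (a - b) := by
          subst hv'
          push_cast [Complex.real_smul]
          ring
        have : dist (u • a + v • b) ((a + b) / 2) = |u - 1/2| * d := by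
          rw [dist_eq_norm, hz, norm_mul, Complex.norm_real, Real.norm_eq_abs, hd,
            dist_eq_norm]
        rw [this]
        have h1 : |u - 1/2| ≤ 1/2 := by
          rw [abs_le]; constructor <;> [linarith; linarith]
        have h2 : |u - 1/2| * d ≤ (1/2) * d :=
          mul_le_mul_of_nonneg_right h1 hd0
        have : (0:ℝ) < ε := hε
        nlinarith
      calc hc (segment ℝ a b)
          ≤ ∑' i : ℕ, ENNReal.ofReal ((fun i => if i = 0 then d / 2 + ε else 0) i) :=
            iInf_le_of_le _ (iInf_le_of_le _ (iInf_le_of_le hcov le_rfl))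
        _ = ENNReal.ofReal (d / 2 + ε) := by
            rw [tsum_eq_single 0]
            · simp
            · intro i hi; simp [hi]
        _ ≤ ENNReal.ofReal (d / 2) + ε := by
            rw [ENNReal.ofReal_add (by positivity) ε.coe_nonneg,
              ENNReal.ofReal_coe_nnreal]
    · -- lower bound
      rcases eq_or_lt_of_le hd0 with hd0' | hd0'
      · simp [← hd0']
      refine le_iInf fun c => le_iInf fun r => le_iInf fun hcov => ?_
      have hab : ‖b - a‖ = d := by
        rw [hd, dist_eq_norm']
      set L : ℂ → ℝ := fun z => ((z - a) * (starRingEnd ℂ) (b - a)).re / d with hL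
      have hLip : ∀ z w : ℂ, |L z - L w| ≤ dist z w := by
        intro z w
        have : L z - L w = ((z - w) * (starRingEnd ℂ) (b - a)).re / d := by
          rw [hL]; simp only; rw [div_sub_div_same, ← Complex.sub_re, ← sub_mul]
          ring_nf
        rw [this, abs_div, abs_of_pos hd0']
        rw [div_le_iff₀ hd0']
        calc |((z - w) * (starRingEnd ℂ) (b - a)).re|
            ≤ ‖(z - w) * (starRingEnd ℂ) (b - a)‖ := Complex.abs_re_le_norm _
          _ = ‖z - w‖ * ‖b - a‖ := by
              rw [norm_mul, Complex.norm_conj]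
          _ = dist z w * d := by
              rw [Complex.dist_eq, hab]
      have hIcc : Set.Icc (0:ℝ) d ⊆ ⋃ i, Metric.ball (L (c i)) (r i) := by
        intro x hx
        have hzmem : (a + (x / d : ℝ) • (b - a)) ∈ segment ℝ a b := by
          have h1 : 0 ≤ x / d := div_nonneg hx.1 hd0
          have h2 : x / d ≤ 1 := (div_le_one hd0').2 hx.2
          refine ⟨1 - x/d, x/d, by linarith, h1, by ring, ?_⟩
          push_cast [Complex.real_smul]
          ring
        obtain ⟨i, hi⟩ := mem_iUnion.1 (hcov hzmem)
        have hLz : L (a + (x / d : ℝ) • (b - a)) = x := by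
          rw [hL]; simp only
          rw [Complex.real_smul]
          have : (a + (x/d : ℝ) * (b - a) - a) * (starRingEnd ℂ) (b - a)
              = (x/d : ℝ) * ((b - a) * (starRingEnd ℂ) (b - a)) := by ring
          rw [this, Complex.mul_conj, Complex.normSq_eq_norm_sq, hab,
            ← Complex.ofReal_mul, Complex.ofReal_re]
          field_simp
        refine mem_iUnion.2 ⟨i, mem_ball.2 ?_⟩
        calc dist x (L (c i)) = |L (a + (x / d : ℝ) • (b - a)) - L (c i)| := by
              rw [hLz, Real.dist_eq]
          _ ≤ dist (a + (x / d : ℝ) • (b - a)) (c i) := hLip _ _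
          _ < r i := mem_ball.1 hi
      have hvol : ENNReal.ofReal d ≤ ∑' i, ENNReal.ofReal (2 * r i) := by
        calc ENNReal.ofReal d = volume (Set.Icc (0:ℝ) d) := by
              rw [Real.volume_Icc]; norm_num
          _ ≤ volume (⋃ i, Metric.ball (L (c i)) (r i)) := measure_mono hIcc
          _ ≤ ∑' i, volume (Metric.ball (L (c i)) (r i)) := measure_iUnion_le _
          _ = ∑' i, ENNReal.ofReal (2 * r i) := by
              simp [Real.volume_ball]
      have h2 : ∑' i, ENNReal.ofReal (2 * r i) = 2 * ∑' i, ENNReal.ofReal (r i) := by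
        simp_rw [ENNReal.ofReal_mul (by norm_num : (0:ℝ) ≤ 2)]
        rw [ENNReal.tsum_mul_left]
        norm_num
      rw [h2] at hvol
      have hdiv : ENNReal.ofReal (d / 2) = ENNReal.ofReal d / 2 := by
        rw [ENNReal.ofReal_div_of_pos (by norm_num)]
        norm_num
      rw [hdiv, ENNReal.div_le_iff (by norm_num) (by norm_num)]
      calc ENNReal.ofReal d ≤ 2 * ∑' i, ENNReal.ofReal (r i) := hvol
        _ = (∑' i, ENNReal.ofReal (r i)) * 2 := mul_comm _ _
  · intro z₀ A
    apply hc_le_of_lipschitz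
    intro z w
    have : dist (z₀ + (dist z z₀ : ℂ)) (z₀ + (dist w z₀ : ℂ))
        = |dist z z₀ - dist w z₀| := by
      rw [dist_eq_norm]
      have : z₀ + (dist z z₀ : ℂ) - (z₀ + (dist w z₀ : ℂ))
          = ((dist z z₀ - dist w z₀ : ℝ) : ℂ) := by push_cast; ring
      rw [this, Complex.norm_real, Real.norm_eq_abs]
    rw [this]
    exact abs_dist_sub_le z w z₀
end

section
/- Let f be analytic on a neighborhood of a compact set Σ with connected complement, let {wₙ} be monic interpolation polynomials with zeros in Σ forming a newtonian table (wₙ divides w_{n+1}), and let Π_{n,m} = P_{n,m}/Q_{n,m} be the multi-point Padé approximants of type (n,m) of f. Then for each n there exists a constant Aₙ ∈ ℂ such that Q_{n,m}(z) P_{n+1,m}(z) − Q_{n+1,m}(z) P_{n,m}(z) = Aₙ w_{n+1}(z), and hence Π_{n+1,m}(z) − Π_{n,m}(z) = Aₙ w_{n+1}(z) / (Q_{n,m}(z) Q_{n+1,m}(z)). -/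
open Filter Metric Set Polynomial
open scoped Topology

lemma aux_prod_dvd (s : Multiset ℂ) :
    ∀ (p : Polynomial ℂ) (F : ℂ → ℂ), Continuous F →
    (∀ z, p.eval z = (s.map fun a => Polynomial.X - Polynomial.C a).prod.eval z * F z) →
    (s.map fun a => Polynomial.X - Polynomial.C a).prod ∣ p := by
  induction s using Multiset.induction_on with
  | empty => intro p F _ _; simp
  | cons a s ih =>
    intro p F hF hid
    have hroot : p.IsRoot a := by
      have h := hid a
      simp [Multiset.map_cons, Multiset.prod_cons] at h
      simpa [Polynomial.IsRoot] using h
    obtain ⟨p₁, hp₁⟩ := Polynomial.dvd_iff_isRoot.mpr hroot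
    have heq : ∀ z, p₁.eval z =
        (s.map fun a => Polynomial.X - Polynomial.C a).prod.eval z * F z := by
      have hEq : Set.EqOn (fun z => p₁.eval z)
          (fun z => (s.map fun a => Polynomial.X - Polynomial.C a).prod.eval z * F z)
          ({a}ᶜ : Set ℂ) := by
        intro z hz
        have h := hid z
        rw [hp₁] at h
        simp [Multiset.map_cons, Multiset.prod_cons] at h
        have hza : (z - a) ≠ 0 := sub_ne_zero.mpr hz
        exact mul_left_cancel₀ hza (by rw [h]; ring)
      have := Continuous.ext_on (dense_compl_singleton a)
        (by continuity) (by continuity) hEq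
      exact fun z => congrFun this z
    rw [hp₁, Multiset.map_cons, Multiset.prod_cons]
    exact mul_dvd_mul_left _ (ih p₁ F hF heq)

/-- Formula (3.2)/(3.3): for a newtonian table (`w_{n+1} ∣ w_{n+2}`), consecutive
multipoint Padé approximants `Πₙ = Pₙ/Qₙ` and `Π_{n+1} = P'/Q'` of `f` satisfy
`Qₙ P' − Q' Pₙ = Aₙ w_{n+1}` for some constant `Aₙ`, and hence
`Π_{n+1}(z) − Πₙ(z) = Aₙ w_{n+1}(z)/(Qₙ(z) Q'(z))` off the zeros of the
denominators. -/
theorem pade_newtonian_identity (Sg V : Set ℂ) (hSg : IsCompact Sg)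
    (hconn : IsConnected (Sgᶜ : Set ℂ)) (hV : IsOpen V) (hSV : Sg ⊆ V)
    (f : ℂ → ℂ) (hf : AnalyticOnNhd ℂ f V)
    (n m : ℕ) (hnm : m ≤ n)
    (w1 w2 : Polynomial ℂ) (hw1 : w1.Monic) (hw1deg : w1.natDegree = n + 1)
    (hw2 : w2.Monic) (hw2deg : w2.natDegree = n + 2)
    (hroots1 : ∀ z : ℂ, w1.IsRoot z → z ∈ Sg) (hroots2 : ∀ z : ℂ, w2.IsRoot z → z ∈ Sg)
    (hdvd : w1 ∣ w2)
    (Pn Qn Pn' Qn' : Polynomial ℂ)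
    (hPn : Pn.degree ≤ ((n - m : ℕ) : WithBot ℕ)) (hQn : Qn.degree ≤ (m : WithBot ℕ))
    (hQn0 : Qn ≠ 0)
    (hPn' : Pn'.degree ≤ ((n + 1 - m : ℕ) : WithBot ℕ)) (hQn' : Qn'.degree ≤ (m : WithBot ℕ))
    (hQn'0 : Qn' ≠ 0)
    (hpade : ∃ h : ℂ → ℂ, AnalyticOnNhd ℂ h V ∧
      ∀ z ∈ V, Qn.eval z * f z - Pn.eval z = w1.eval z * h z)
    (hpade' : ∃ h : ℂ → ℂ, AnalyticOnNhd ℂ h V ∧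
      ∀ z ∈ V, Qn'.eval z * f z - Pn'.eval z = w2.eval z * h z) :
    ∃ A : ℂ, Qn * Pn' - Qn' * Pn = Polynomial.C A * w1 ∧
      ∀ z : ℂ, Qn.eval z ≠ 0 → Qn'.eval z ≠ 0 →
        Pn'.eval z / Qn'.eval z - Pn.eval z / Qn.eval z =
          A * w1.eval z / (Qn.eval z * Qn'.eval z) := by
  obtain ⟨h1, hh1a, hh1⟩ := hpade
  obtain ⟨h2, hh2a, hh2⟩ := hpade'
  obtain ⟨q, hq⟩ := hdvd
  set D : Polynomial ℂ := Qn * Pn' - Qn' * Pn with hD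
  set g : ℂ → ℂ := fun z => Qn'.eval z * h1 z - q.eval z * (Qn.eval z * h2 z) with hg
  have key : ∀ z ∈ V, D.eval z = w1.eval z * g z := by
    intro z hz
    have e1 := hh1 z hz
    have e2 := hh2 z hz
    have hqe : w2.eval z = w1.eval z * q.eval z := by rw [hq, Polynomial.eval_mul]
    simp only [hD, hg, Polynomial.eval_sub, Polynomial.eval_mul]
    linear_combination Qn'.eval z * e1 - Qn.eval z * e2 - Qn.eval z * h2 z * hqe
  -- the glued function
  set F : ℂ → ℂ := fun z => if w1.eval z = 0 then g z else D.eval z / w1.eval z with hF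
  have hFD : ∀ z, D.eval z = w1.eval z * F z := by
    intro z
    by_cases hz : w1.eval z = 0
    · have hzV : z ∈ V := hSV (hroots1 z hz)
      simp [hF, hz, key z hzV]
    · simp [hF, hz]
      field_simp
  have hFg : ∀ z ∈ V, F z = g z := by
    intro z hz
    by_cases h0 : w1.eval z = 0
    · simp [hF, h0]
    · simp [hF, h0]
      rw [key z hz]
      field_simp
  have hgc : ContinuousOn g V := by
    have c1 := hh1a.continuousOn
    have c2 := hh2a.continuousOn
    fun_prop
  have hFc : Continuous F := by
    rw [continuous_iff_continuousAt]
    intro z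
    by_cases hz : w1.eval z = 0
    · have hzV : z ∈ V := hSV (hroots1 z hz)
      have : ContinuousAt g z := hgc.continuousAt (hV.mem_nhds hzV)
      refine this.congr ?_
      filter_upwards [hV.mem_nhds hzV] with w hw using (hFg w hw).symm
    · have hU : IsOpen {w : ℂ | w1.eval w ≠ 0} :=
        isOpen_compl_iff.mpr (isClosed_eq (w1.continuous) continuous_const)
      have hca : ContinuousAt (fun w => D.eval w / w1.eval w) z :=
        (D.continuous.continuousAt).div (w1.continuous.continuousAt) hz
      refine hca.congr ?_
      filter_upwards [hU.mem_nhds hz] with w hw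
      simp [hF, hw]
  -- w1 divides D
  have hw1prod : w1 = (w1.roots.map fun a => Polynomial.X - Polynomial.C a).prod :=
    (IsAlgClosed.splits w1).eq_prod_roots_of_monic hw1
  have hdvdD : w1 ∣ D := by
    rw [hw1prod]
    apply aux_prod_dvd w1.roots D F hFc
    intro z
    rw [← hw1prod]
    exact hFD z
  obtain ⟨E, hE⟩ := hdvdD
  -- degree bounds
  have hw1ne : w1 ≠ 0 := hw1.ne_zero
  have hDdeg : D.degree ≤ ((n + 1 : ℕ) : WithBot ℕ) := by
    have d1 : (Qn * Pn').degree ≤ ((n + 1 : ℕ) : WithBot ℕ) := by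
      calc (Qn * Pn').degree = Qn.degree + Pn'.degree := Polynomial.degree_mul
        _ ≤ ((m : ℕ) : WithBot ℕ) + ((n + 1 - m : ℕ) : WithBot ℕ) := add_le_add hQn hPn'
        _ = ((m + (n + 1 - m) : ℕ) : WithBot ℕ) := by rw [Nat.cast_add]
        _ = ((n + 1 : ℕ) : WithBot ℕ) := by rw [Nat.add_sub_cancel' (by omega)]
    have d2 : (Qn' * Pn).degree ≤ ((n + 1 : ℕ) : WithBot ℕ) := by
      calc (Qn' * Pn).degree = Qn'.degree + Pn.degree := Polynomial.degree_mul
        _ ≤ ((m : ℕ) : WithBot ℕ) + ((n - m : ℕ) : WithBot ℕ) := add_le_add hQn' hPn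
        _ = ((m + (n - m) : ℕ) : WithBot ℕ) := by rw [Nat.cast_add]
        _ ≤ ((n + 1 : ℕ) : WithBot ℕ) := by
            rw [Nat.add_sub_cancel' hnm]; exact_mod_cast Nat.le_succ n
    exact le_trans (Polynomial.degree_sub_le _ _) (max_le d1 d2)
  have hEC : E = Polynomial.C (E.coeff 0) := by
    by_cases hE0 : E = 0
    · simp [hE0]
    · apply Polynomial.eq_C_of_natDegree_eq_zero
      have hDne : D ≠ 0 := by rw [hE]; exact mul_ne_zero hw1ne hE0
      have h1 : D.natDegree = w1.natDegree + E.natDegree := by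
        rw [hE]; exact Polynomial.natDegree_mul hw1ne hE0
      have h2 : D.natDegree ≤ n + 1 := Polynomial.natDegree_le_iff_degree_le.mpr hDdeg
      omega
  refine ⟨E.coeff 0, ?_, ?_⟩
  · have hE' : D = w1 * E := hE
    rw [hE', ← hEC, mul_comm]
  · intro z hz hz'
    have hval : Qn.eval z * Pn'.eval z - Qn'.eval z * Pn.eval z = E.coeff 0 * w1.eval z := by
      have h := congrArg (Polynomial.eval z) (hE : D = w1 * E)
      rw [hEC] at h
      simpa [hD, mul_comm] using h
    have hden : Qn'.eval z * Qn.eval z ≠ 0 := mul_ne_zero hz' hz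
    rw [div_sub_div _ _ hz' hz, div_eq_div_iff hden (mul_ne_zero hz hz')]
    linear_combination (Qn.eval z * Qn'.eval z) * hval
end
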